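/- Let (α_k)_{k≥0} be a sequence of non-negative integers with associated vectors X_k and denominators q_k. Assume that X̂_{2k} → 𝔭 and X̂_{2k+1} → 𝔮 as k → ∞ with 𝔭 ≠ 𝔮, that d(X̂_{k−2} ⊕ X̂_k, X̂_k) → 0, and that q_k/q_{k−1} → +∞. Then for every (x,y) ∈ △̄ ∖ {(0,0)}: φ₁^{α₀}φ₀ ⋯ φ₁^{α_{2k}}φ₀(x,y) → 𝔭 and φ₁^{α₀}φ₀ ⋯ φ₁^{α_{2k+1}}φ₀(x,y) → 𝔮 as k → ∞; moreover φ₁^{α₀}φ₀ ⋯ φ₁^{α_{2k}}φ₀(0,0) → 𝔮 and φ₁^{α₀}φ₀ ⋯ φ₁^{α_{2k+1}}φ₀(0,0) → 𝔭. -/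

import Mathlib

open Filter Topology

noncomputable def phi0 (p : ℝ × ℝ) : ℝ × ℝ := (1 / (1 + p.2), p.1 / (1 + p.2))
noncomputable def phi1 (p : ℝ × ℝ) : ℝ × ℝ := (p.1 / (1 + p.2), p.2 / (1 + p.2))

/-- The open triangle △ = {(x,y) : 1 ≥ x ≥ y > 0}. -/
def tri : Set (ℝ × ℝ) := {p | 1 ≥ p.1 ∧ p.1 ≥ p.2 ∧ p.2 > 0}

/-- The composition φ₁^{α₀} φ₀ ⋯ φ₁^{α_k} φ₀. -/
noncomputable def compPhi (a : ℕ → ℕ) : ℕ → (ℝ × ℝ → ℝ × ℝ)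
  | 0 => phi1^[a 0] ∘ phi0
  | k + 1 => compPhi a k ∘ (phi1^[a (k + 1)] ∘ phi0)

/-- The vectors X_{-3}, X_{-2}, X_{-1}, X_0, X_1, … (indices shifted by 3),
with coordinates written as (q, p, r). -/
def Xv (a : ℕ → ℕ) : ℕ → ℤ × ℤ × ℤ
  | 0 => (0, 0, 1)
  | 1 => (1, 0, 0)
  | 2 => (1, 1, 0)
  | n + 3 => Xv a n + Xv a (n + 2) + (a n : ℤ) • Xv a (n + 1)

/-- The rational pair X̂ = (p/q, r/q) corresponding to the vector X = (q,p,r). -/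
noncomputable def Xhat (v : ℤ × ℤ × ℤ) : ℝ × ℝ :=
  ((v.2.1 : ℝ) / (v.1 : ℝ), (v.2.2 : ℝ) / (v.1 : ℝ))

/-- Euclidean distance on ℝ². -/
noncomputable def eucDist (a b : ℝ × ℝ) : ℝ :=
  Real.sqrt ((a.1 - b.1) ^ 2 + (a.2 - b.2) ^ 2)

lemma Xv_rec (a : ℕ → ℕ) (n : ℕ) :
    Xv a (n + 3) = Xv a n + Xv a (n + 2) + (a n : ℤ) • Xv a (n + 1) := by
  rw [Xv]

lemma Xv3 (a : ℕ → ℕ) : Xv a 3 = (1 + (a 0 : ℤ), 1, 1) := by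
  have : Xv a 3 = Xv a 0 + Xv a 2 + (a 0 : ℤ) • Xv a 1 := Xv_rec a 0
  rw [this]
  simp [Xv, Prod.ext_iff, smul_eq_mul]

lemma phi1_iter (n : ℕ) (x y : ℝ) (hy : 0 ≤ y) :
    phi1^[n] (x, y) = (x / (1 + n * y), y / (1 + n * y)) := by
  induction n generalizing x y with
  | zero => simp
  | succ n ih =>
    rw [Function.iterate_succ_apply]
    have h1 : (0:ℝ) < 1 + y := by linarith
    have : phi1 (x, y) = (x / (1 + y), y / (1 + y)) := rfl
    rw [this, ih _ _ (by positivity)]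
    have h2 : (0:ℝ) < 1 + (n:ℝ) * (y / (1 + y)) := by positivity
    have h3 : (0:ℝ) < 1 + ((n:ℝ) + 1) * y := by positivity
    refine Prod.ext ?_ ?_ <;> push_cast <;> field_simp
    all_goals try ring
    all_goals tauto

noncomputable def qR (a : ℕ → ℕ) (n : ℕ) : ℝ := ((Xv a n).1 : ℝ)
noncomputable def pR (a : ℕ → ℕ) (n : ℕ) : ℝ := ((Xv a n).2.1 : ℝ)
noncomputable def rR (a : ℕ → ℕ) (n : ℕ) : ℝ := ((Xv a n).2.2 : ℝ)

lemma qR_rec (a : ℕ → ℕ) (n : ℕ) :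
    qR a (n + 3) = qR a n + qR a (n + 2) + (a n : ℝ) * qR a (n + 1) := by
  simp [qR, Xv_rec a n, Prod.fst_add, Prod.smul_fst, smul_eq_mul]
  try push_cast
  try ring

lemma pR_rec (a : ℕ → ℕ) (n : ℕ) :
    pR a (n + 3) = pR a n + pR a (n + 2) + (a n : ℝ) * pR a (n + 1) := by
  simp [pR, Xv_rec a n, Prod.snd_add, Prod.fst_add, Prod.smul_snd, Prod.smul_fst, smul_eq_mul]
  try push_cast
  try ring

lemma rR_rec (a : ℕ → ℕ) (n : ℕ) :
    rR a (n + 3) = rR a n + rR a (n + 2) + (a n : ℝ) * rR a (n + 1) := by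
  simp [rR, Xv_rec a n, Prod.snd_add, Prod.smul_snd, smul_eq_mul]
  try push_cast
  try ring

lemma inner_fst (x y c : ℝ) (h1y : (1:ℝ)+y ≠ 0) (hE : 1+y+c*x ≠ 0) :
    (1/(1+y))/(1 + c*(x/(1+y))) = 1/(1+y+c*x) := by
  have h : 1 + c * (x / (1 + y)) = (1 + y + c*x)/(1+y) := by field_simp
  rw [h, div_div_div_cancel_right₀ h1y]

lemma inner_snd (x y c : ℝ) (h1y : (1:ℝ)+y ≠ 0) (hE : 1+y+c*x ≠ 0) :
    (x/(1+y))/(1 + c*(x/(1+y))) = x/(1+y+c*x) := by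
  have h : 1 + c * (x / (1 + y)) = (1 + y + c*x)/(1+y) := by field_simp
  rw [h, div_div_div_cancel_right₀ h1y]

lemma compPhi_eq (a : ℕ → ℕ) : ∀ (k : ℕ) (x y : ℝ), x ≤ 1 → y ≤ x → 0 ≤ y →
    compPhi a k (x, y) =
      (((1 - x) * pR a (k + 2) + x * pR a (k + 3) + y * pR a (k + 1)) /
        ((1 - x) * qR a (k + 2) + x * qR a (k + 3) + y * qR a (k + 1)),
       ((1 - x) * rR a (k + 2) + x * rR a (k + 3) + y * rR a (k + 1)) /
        ((1 - x) * qR a (k + 2) + x * qR a (k + 3) + y * qR a (k + 1))) := by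
  intro k
  induction k with
  | zero =>
    intro x y hx1 hxy hy
    have hx0 : 0 ≤ x := le_trans hy hxy
    have h1y : (0:ℝ) < 1 + y := by linarith
    have hE : (0:ℝ) < 1 + y + (a 0 : ℝ) * x := by positivity
    have hstep : compPhi a 0 (x, y) = phi1^[a 0] (1 / (1 + y), x / (1 + y)) := rfl
    rw [hstep, phi1_iter _ _ _ (by positivity)]
    have hq1 : qR a 1 = 1 := by simp [qR, Xv]
    have hq2 : qR a 2 = 1 := by simp [qR, Xv]
    have hq3 : qR a 3 = 1 + (a 0 : ℝ) := by simp [qR, Xv3]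
    have hp1 : pR a 1 = 0 := by simp [pR, Xv]
    have hp2 : pR a 2 = 1 := by simp [pR, Xv]
    have hp3 : pR a 3 = 1 := by simp [pR, Xv3]
    have hr1 : rR a 1 = 0 := by simp [rR, Xv]
    have hr2 : rR a 2 = 0 := by simp [rR, Xv]
    have hr3 : rR a 3 = 1 := by simp [rR, Xv3]
    rw [hq1, hq2, hq3, hp1, hp2, hp3, hr1, hr2, hr3]
    have hDen : ((1:ℝ)-x)*1 + x*(1+(a 0:ℝ)) + y*1 = 1 + y + (a 0:ℝ)*x := by ring
    refine Prod.ext ?_ ?_ <;> simp only []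
    · rw [inner_fst x y _ h1y.ne' hE.ne', hDen]
      rw [div_eq_div_iff hE.ne' hE.ne']; ring
    · rw [inner_snd x y _ h1y.ne' hE.ne', hDen]
      rw [div_eq_div_iff hE.ne' hE.ne']; ring
  | succ k ih =>
    intro x y hx1 hxy hy
    have hx0 : 0 ≤ x := le_trans hy hxy
    have h1y : (0:ℝ) < 1 + y := by linarith
    have hα : (0:ℝ) ≤ (a (k+1) : ℝ) := Nat.cast_nonneg _
    have hE : (0:ℝ) < 1 + y + (a (k+1) : ℝ) * x := by positivity
    have hE' := hE.ne'
    have hE1 : (1:ℝ) ≤ 1 + y + (a (k+1) : ℝ) * x := by nlinarith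
    have hstep : compPhi a (k+1) (x, y)
        = compPhi a k (phi1^[a (k+1)] (1 / (1 + y), x / (1 + y))) := rfl
    have hinner : phi1^[a (k+1)] (1 / (1 + y), x / (1 + y))
        = (1 / (1 + y + (a (k+1) : ℝ) * x), x / (1 + y + (a (k+1) : ℝ) * x)) := by
      rw [phi1_iter _ _ _ (by positivity)]
      exact Prod.ext (inner_fst x y _ h1y.ne' hE') (inner_snd x y _ h1y.ne' hE')
    rw [hstep, hinner, ih _ _ (by rw [div_le_one hE]; exact hE1)
      ((div_le_div_iff_of_pos_right hE).mpr hx1) (by positivity)]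
    have key : ∀ nl dl nr dr : ℝ,
        nr = (1 + y + (a (k+1) : ℝ) * x) * nl → dr = (1 + y + (a (k+1) : ℝ) * x) * dl →
        nl / dl = nr / dr := by
      intro nl dl nr dr h1 h2; rw [h1, h2, mul_div_mul_left _ _ hE']
    refine Prod.ext ?_ ?_ <;> simp only []
    · rw [pR_rec a (k+1), qR_rec a (k+1)]
      exact key _ _ _ _ (by field_simp; ring) (by field_simp; ring)
    · rw [rR_rec a (k+1), qR_rec a (k+1)]
      exact key _ _ _ _ (by field_simp; ring) (by field_simp; ring)

lemma Xv_nonneg (a : ℕ → ℕ) : ∀ n, 0 ≤ (Xv a n).1 ∧ 0 ≤ (Xv a n).2.1 ∧ 0 ≤ (Xv a n).2.2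
    ∧ (Xv a n).2.1 ≤ (Xv a n).1 := by
  have key : ∀ n, (0 ≤ (Xv a n).1 ∧ 0 ≤ (Xv a n).2.1 ∧ 0 ≤ (Xv a n).2.2 ∧ (Xv a n).2.1 ≤ (Xv a n).1)
      ∧ (0 ≤ (Xv a (n+1)).1 ∧ 0 ≤ (Xv a (n+1)).2.1 ∧ 0 ≤ (Xv a (n+1)).2.2 ∧ (Xv a (n+1)).2.1 ≤ (Xv a (n+1)).1)
      ∧ (0 ≤ (Xv a (n+2)).1 ∧ 0 ≤ (Xv a (n+2)).2.1 ∧ 0 ≤ (Xv a (n+2)).2.2 ∧ (Xv a (n+2)).2.1 ≤ (Xv a (n+2)).1) := by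
    intro n
    induction n with
    | zero => norm_num [Xv]
    | succ n ih =>
      refine ⟨ih.2.1, ih.2.2, ?_⟩
      obtain ⟨⟨h01, h02, h03, h04⟩, ⟨h11, h12, h13, h14⟩, ⟨h21, h22, h23, h24⟩⟩ := ih
      have ha : (0:ℤ) ≤ (a n : ℤ) := Int.natCast_nonneg _
      rw [Xv_rec a n]
      simp only [Prod.fst_add, Prod.snd_add, Prod.smul_fst, Prod.smul_snd, smul_eq_mul]
      have m1 := mul_le_mul_of_nonneg_left h14 ha
      have m2 := mul_nonneg ha h11
      have m3 := mul_nonneg ha h12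
      have m4 := mul_nonneg ha h13
      refine ⟨by linarith, by linarith, by linarith, by linarith⟩
  exact fun n => (key n).1

lemma Xv_pos (a : ℕ → ℕ) : ∀ n, 1 ≤ (Xv a (n+1)).1 ∧ (Xv a (n+1)).2.2 ≤ (Xv a (n+1)).1 := by
  have key : ∀ n, (1 ≤ (Xv a (n+1)).1 ∧ (Xv a (n+1)).2.2 ≤ (Xv a (n+1)).1)
      ∧ (1 ≤ (Xv a (n+2)).1 ∧ (Xv a (n+2)).2.2 ≤ (Xv a (n+2)).1)
      ∧ (1 ≤ (Xv a (n+3)).1 ∧ (Xv a (n+3)).2.2 ≤ (Xv a (n+3)).1) := by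
    intro n
    induction n with
    | zero =>
      refine ⟨by norm_num [Xv], by norm_num [Xv], ?_⟩
      rw [Xv3]
      constructor <;> simp <;> try exact Int.natCast_nonneg _
    | succ n ih =>
      refine ⟨ih.2.1, ih.2.2, ?_⟩
      obtain ⟨⟨h11, h12⟩, ⟨h21, h22⟩, ⟨h31, h32⟩⟩ := ih
      have ha : (0:ℤ) ≤ (a (n+1) : ℤ) := Int.natCast_nonneg _
      have hn1 := Xv_nonneg a (n+1)
      have hn2 := Xv_nonneg a (n+2)
      have hn3 := Xv_nonneg a (n+3)
      have hrec := Xv_rec a (n+1)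
      constructor
      · have : (Xv a (n+1+3)).1 = (Xv a (n+1)).1 + (Xv a (n+3)).1 + (a (n+1):ℤ) * (Xv a (n+2)).1 := by
          rw [hrec]; simp [Prod.fst_add, Prod.smul_fst, smul_eq_mul]
        rw [show n+1+3 = n+4 from rfl] at this
        rw [this]
        have := mul_nonneg ha hn2.1
        linarith
      · have e1 : (Xv a (n+1+3)).1 = (Xv a (n+1)).1 + (Xv a (n+3)).1 + (a (n+1):ℤ) * (Xv a (n+2)).1 := by
          rw [hrec]; simp [Prod.fst_add, Prod.smul_fst, smul_eq_mul]
        have e2 : (Xv a (n+1+3)).2.2 = (Xv a (n+1)).2.2 + (Xv a (n+3)).2.2 + (a (n+1):ℤ) * (Xv a (n+2)).2.2 := by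
          rw [hrec]; simp [Prod.snd_add, Prod.smul_snd, smul_eq_mul]
        rw [show n+1+3 = n+4 from rfl] at e1 e2
        rw [e1, e2]
        have m1 := mul_le_mul_of_nonneg_left h22 ha
        have hr1 : (Xv a (n+1)).2.2 ≤ (Xv a (n+1)).1 := h12
        linarith
  exact fun n => (key n).1

lemma lim_aux (g0 g1 g2 q0 q1 q2 : ℕ → ℝ) (x y L : ℝ) (hx : 0 < x)
    (h2pos : ∀ n, 0 < q2 n)
    (hb0 : ∀ n, 0 ≤ g0 n) (hb0' : ∀ n, g0 n ≤ q0 n)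
    (hb1 : ∀ n, 0 ≤ g1 n) (hb1' : ∀ n, g1 n ≤ q1 n)
    (h0 : Filter.Tendsto (fun n => q0 n / q2 n) Filter.atTop (nhds 0))
    (h1 : Filter.Tendsto (fun n => q1 n / q2 n) Filter.atTop (nhds 0))
    (hL : Filter.Tendsto (fun n => g2 n / q2 n) Filter.atTop (nhds L)) :
    Filter.Tendsto (fun n => ((1 - x) * g1 n + x * g2 n + y * g0 n) /
      ((1 - x) * q1 n + x * q2 n + y * q0 n)) Filter.atTop (nhds L) := by
  have hg1 : Filter.Tendsto (fun n => g1 n / q2 n) Filter.atTop (nhds 0) :=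
    tendsto_of_tendsto_of_tendsto_of_le_of_le tendsto_const_nhds h1
      (fun n => div_nonneg (hb1 n) (h2pos n).le)
      (fun n => div_le_div_of_nonneg_right (hb1' n) (h2pos n).le)
  have hg0 : Filter.Tendsto (fun n => g0 n / q2 n) Filter.atTop (nhds 0) :=
    tendsto_of_tendsto_of_tendsto_of_le_of_le tendsto_const_nhds h0
      (fun n => div_nonneg (hb0 n) (h2pos n).le)
      (fun n => div_le_div_of_nonneg_right (hb0' n) (h2pos n).le)
  have hone : Filter.Tendsto (fun n => q2 n / q2 n) Filter.atTop (nhds 1) := by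
    have : (fun n => q2 n / q2 n) = fun _ => (1:ℝ) := by
      funext n; exact div_self (h2pos n).ne'
    rw [this]; exact tendsto_const_nhds
  have hN : Filter.Tendsto (fun n => ((1 - x) * g1 n + x * g2 n + y * g0 n) / q2 n)
      Filter.atTop (nhds (x * L)) := by
    have h := ((hg1.const_mul (1-x)).add (hL.const_mul x)).add (hg0.const_mul y)
    simp only [mul_zero, zero_add, add_zero] at h
    refine h.congr fun n => ?_
    field_simp <;> ring
  have hD : Filter.Tendsto (fun n => ((1 - x) * q1 n + x * q2 n + y * q0 n) / q2 n)
      Filter.atTop (nhds x) := by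
    have h := ((h1.const_mul (1-x)).add (hone.const_mul x)).add (h0.const_mul y)
    simp only [mul_zero, zero_add, add_zero, mul_one] at h
    refine h.congr fun n => ?_
    field_simp <;> ring
  have h := hN.div hD hx.ne'
  have h2 : Filter.Tendsto (fun n => ((1 - x) * g1 n + x * g2 n + y * g0 n) /
      ((1 - x) * q1 n + x * q2 n + y * q0 n)) Filter.atTop (nhds (x * L / x)) :=
    h.congr fun n => div_div_div_cancel_right₀ (h2pos n).ne' _ _
  rwa [mul_div_cancel_left₀ _ hx.ne'] at h2


/-- non-convergent case: if X̂_{2k} → 𝔭, X̂_{2k+1} → 𝔮 with 𝔭 ≠ 𝔮,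
d(X̂_{k-2} ⊕ X̂_k, X̂_k) → 0, and q_k/q_{k-1} → +∞, then for every
(x,y) ∈ △̄ ∖ {(0,0)} one has φ₁^{α₀}φ₀⋯φ₁^{α_{2k}}φ₀(x,y) → 𝔭 and
φ₁^{α₀}φ₀⋯φ₁^{α_{2k+1}}φ₀(x,y) → 𝔮, while the images of (0,0) converge to 𝔮 and 𝔭
respectively.  (Recall `Xv a (k+3) = X_k`.) -/
theorem nonconvergent_limits (a : ℕ → ℕ) (P Q : ℝ × ℝ)
    (hP : Tendsto (fun k : ℕ => Xhat (Xv a (2 * k + 3))) atTop (𝓝 P))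
    (hQ : Tendsto (fun k : ℕ => Xhat (Xv a (2 * k + 4))) atTop (𝓝 Q))
    (hPQ : P ≠ Q)
    (hmed : Tendsto (fun k : ℕ =>
        eucDist (Xhat (Xv a (k + 1) + Xv a (k + 3))) (Xhat (Xv a (k + 3)))) atTop (𝓝 0))
    (hq : Tendsto (fun k : ℕ => ((Xv a (k + 3)).1 : ℝ) / ((Xv a (k + 2)).1 : ℝ)) atTop atTop) :
    (∀ p ∈ closure tri \ {((0 : ℝ), (0 : ℝ))},
      Tendsto (fun k : ℕ => compPhi a (2 * k) p) atTop (𝓝 P) ∧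
      Tendsto (fun k : ℕ => compPhi a (2 * k + 1) p) atTop (𝓝 Q)) ∧
    Tendsto (fun k : ℕ => compPhi a (2 * k) ((0 : ℝ), (0 : ℝ))) atTop (𝓝 Q) ∧
    Tendsto (fun k : ℕ => compPhi a (2 * k + 1) ((0 : ℝ), (0 : ℝ))) atTop (𝓝 P) := by
  have hQpos : ∀ n, (0:ℝ) < qR a (n+1) := fun n =>
    Int.cast_pos.mpr (lt_of_lt_of_le Int.zero_lt_one (Xv_pos a n).1)
  have hqn : ∀ n, (0:ℝ) ≤ qR a n := fun n => Int.cast_nonneg_iff.mpr (Xv_nonneg a n).1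
  have hpn : ∀ n, (0:ℝ) ≤ pR a n := fun n => Int.cast_nonneg_iff.mpr (Xv_nonneg a n).2.1
  have hrn : ∀ n, (0:ℝ) ≤ rR a n := fun n => Int.cast_nonneg_iff.mpr (Xv_nonneg a n).2.2.1
  have hple : ∀ n, pR a n ≤ qR a n := fun n => Int.cast_le.mpr (Xv_nonneg a n).2.2.2
  have hrle : ∀ n, rR a (n+1) ≤ qR a (n+1) := fun n => Int.cast_le.mpr (Xv_pos a n).2
  have hmono : ∀ n, qR a (n+1) ≤ qR a (n+2) := by
    intro n
    match n with
    | 0 => norm_num [qR, Xv]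
    | Nat.succ m =>
      rw [show m+1+2 = m+3 from rfl, qR_rec a m]
      have h1 := hqn m
      have h2 := mul_nonneg (show (0:ℝ) ≤ (a m : ℝ) from Nat.cast_nonneg _) (hqn (m+1))
      linarith
  have Q1 : Tendsto (fun k => qR a (k+2) / qR a (k+3)) atTop (𝓝 0) :=
    (tendsto_inv_atTop_zero.comp hq).congr fun k => inv_div _ _
  have Q0 : Tendsto (fun k => qR a (k+1) / qR a (k+3)) atTop (𝓝 0) :=
    tendsto_of_tendsto_of_tendsto_of_le_of_le tendsto_const_nhds Q1
      (fun k => div_nonneg (hqn (k+1)) (hqn (k+3)))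
      (fun k => div_le_div_of_nonneg_right (hmono k) (hqn (k+3)))
  have t2 : Tendsto (fun k : ℕ => 2*k) atTop atTop :=
    tendsto_atTop_mono (fun n => by simp only [id_eq]; omega) tendsto_id
  have t2' : Tendsto (fun k : ℕ => 2*k+1) atTop atTop :=
    tendsto_atTop_mono (fun n => by simp only [id_eq]; omega) tendsto_id
  have hP1 : Tendsto (fun k => pR a (2*k+3) / qR a (2*k+3)) atTop (𝓝 P.1) :=
    (continuous_fst.tendsto P).comp hP
  have hP2 : Tendsto (fun k => rR a (2*k+3) / qR a (2*k+3)) atTop (𝓝 P.2) :=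
    (continuous_snd.tendsto P).comp hP
  have hQ1 : Tendsto (fun k => pR a (2*k+4) / qR a (2*k+4)) atTop (𝓝 Q.1) :=
    (continuous_fst.tendsto Q).comp hQ
  have hQ2 : Tendsto (fun k => rR a (2*k+4) / qR a (2*k+4)) atTop (𝓝 Q.2) :=
    (continuous_snd.tendsto Q).comp hQ
  have EvenP : ∀ x y : ℝ, 0 < x → x ≤ 1 → y ≤ x → 0 ≤ y →
      Tendsto (fun k : ℕ => compPhi a (2*k) (x, y)) atTop (𝓝 P) := by
    intro x y hx hx1 hxy hy0
    have E1 := lim_aux (fun k => pR a (2*k+1)) (fun k => pR a (2*k+2)) (fun k => pR a (2*k+3))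
      (fun k => qR a (2*k+1)) (fun k => qR a (2*k+2)) (fun k => qR a (2*k+3)) x y P.1 hx
      (fun k => hQpos (2*k+2)) (fun k => hpn _) (fun k => hple _) (fun k => hpn _)
      (fun k => hple _) (Q0.comp t2) (Q1.comp t2) hP1
    have E2 := lim_aux (fun k => rR a (2*k+1)) (fun k => rR a (2*k+2)) (fun k => rR a (2*k+3))
      (fun k => qR a (2*k+1)) (fun k => qR a (2*k+2)) (fun k => qR a (2*k+3)) x y P.2 hx
      (fun k => hQpos (2*k+2)) (fun k => hrn _) (fun k => hrle (2*k)) (fun k => hrn _)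
      (fun k => hrle (2*k+1)) (Q0.comp t2) (Q1.comp t2) hP2
    exact Tendsto.congr (fun k => (compPhi_eq a (2*k) x y hx1 hxy hy0).symm) (E1.prodMk_nhds E2)
  have OddQ : ∀ x y : ℝ, 0 < x → x ≤ 1 → y ≤ x → 0 ≤ y →
      Tendsto (fun k : ℕ => compPhi a (2*k+1) (x, y)) atTop (𝓝 Q) := by
    intro x y hx hx1 hxy hy0
    have E1 := lim_aux (fun k => pR a (2*k+2)) (fun k => pR a (2*k+3)) (fun k => pR a (2*k+4))
      (fun k => qR a (2*k+2)) (fun k => qR a (2*k+3)) (fun k => qR a (2*k+4)) x y Q.1 hx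
      (fun k => hQpos (2*k+3)) (fun k => hpn _) (fun k => hple _) (fun k => hpn _)
      (fun k => hple _) (Q0.comp t2') (Q1.comp t2') hQ1
    have E2 := lim_aux (fun k => rR a (2*k+2)) (fun k => rR a (2*k+3)) (fun k => rR a (2*k+4))
      (fun k => qR a (2*k+2)) (fun k => qR a (2*k+3)) (fun k => qR a (2*k+4)) x y Q.2 hx
      (fun k => hQpos (2*k+3)) (fun k => hrn _) (fun k => hrle (2*k+1)) (fun k => hrn _)
      (fun k => hrle (2*k+2)) (Q0.comp t2') (Q1.comp t2') hQ2
    exact Tendsto.congr (fun k => (compPhi_eq a (2*k+1) x y hx1 hxy hy0).symm) (E1.prodMk_nhds E2)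
  have hform0 : ∀ k, compPhi a k ((0:ℝ), (0:ℝ))
      = (pR a (k+2) / qR a (k+2), rR a (k+2) / qR a (k+2)) := by
    intro k
    rw [compPhi_eq a k 0 0 (by norm_num) le_rfl le_rfl]
    norm_num
  refine ⟨?_, ?_, ?_⟩
  · intro p hp
    obtain ⟨hcl, hne⟩ := hp
    have hsub : p.1 ≤ 1 ∧ p.2 ≤ p.1 ∧ 0 ≤ p.2 := by
      have h : closure tri ⊆ {q : ℝ×ℝ | q.1 ≤ 1 ∧ q.2 ≤ q.1 ∧ 0 ≤ q.2} :=
        closure_minimal (fun q hq => ⟨hq.1, hq.2.1, le_of_lt hq.2.2⟩)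
          (IsClosed.inter (isClosed_le continuous_fst continuous_const)
            (IsClosed.inter (isClosed_le continuous_snd continuous_fst)
              (isClosed_le continuous_const continuous_snd)))
      exact h hcl
    have hx : 0 < p.1 := by
      rcases lt_or_eq_of_le (le_trans hsub.2.2 hsub.2.1) with h | h
      · exact h
      · exfalso
        apply hne
        have h2 : p.2 = 0 := le_antisymm (h ▸ hsub.2.1) hsub.2.2
        have : p = ((0:ℝ), (0:ℝ)) := Prod.ext h.symm h2
        simpa [Set.mem_singleton_iff] using this
    exact ⟨EvenP p.1 p.2 hx hsub.1 hsub.2.1 hsub.2.2,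
           OddQ p.1 p.2 hx hsub.1 hsub.2.1 hsub.2.2⟩
  · have hsh : Tendsto (fun k : ℕ => Xhat (Xv a (2*(k+1)+2))) atTop (𝓝 Q) :=
      hQ.congr fun k => by rw [show 2*k+4 = 2*(k+1)+2 by ring]
    have hsh2 : Tendsto (fun k : ℕ => Xhat (Xv a (2*k+2))) atTop (𝓝 Q) :=
      (tendsto_add_atTop_iff_nat 1).mp hsh
    exact Tendsto.congr (fun k => (hform0 (2*k)).symm) hsh2
  · exact Tendsto.congr (fun k => (hform0 (2*k+1)).symm) hP
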